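/- Let A₁ ≥ 1 and r ≥ 1 be integers, let X_{i,k} ∈ {0,1} for 1 ≤ i ≤ A₁ and 1 ≤ k ≤ r be arbitrary, let 0 < q ≤ 1 and 0 ≤ s ≤ 1, and consider the q-process with pile sizes A₁ = A_1, A_2, …, A_{r+1} and the s-threshold process with pile sizes A^[s]_1, A^[s]_2, …, A^[s]_{r+1}, both driven by the same values X_{i,k}. If ⌈s·A₁⌉ ≤ ⌈q·A₁⌉, then A^[s]_k ≥ A_k for every k = 1, …, r+1. -/

import Mathlib

open scoped Classical in
/-- The q-process: cards are labeled 1,…,A1; S₀ = {1,…,A1}, and at step k+1 every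
remaining card i with X i (k+1) = true that is among the ⌈q·|Sₖ|⌉ smallest remaining
labels is removed.  `qProc q A1 X k` is the set of remaining cards after k steps,
so its cardinality is A_{k+1}. -/
noncomputable def qProc (q : ℝ) (A1 : ℕ) (X : ℕ → ℕ → Bool) : ℕ → Finset ℕ
  | 0 => Finset.Icc 1 A1
  | (k + 1) =>
      (qProc q A1 X k).filter fun i =>
        ¬(X i (k + 1) = true ∧
          ((qProc q A1 X k).filter (· ≤ i)).card ≤ ⌈q * ((qProc q A1 X k).card : ℝ)⌉₊)

open scoped Classical in
/-- The s-threshold process: cards are labeled 1,…,A1; T₀ = {1,…,A1}, and at step k+1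
every remaining card i with X i (k+1) = true and i ≤ s·A1 is removed.
`sProc s A1 X k` is the set of remaining cards after k steps, so its cardinality
is A^[s]_{k+1}. -/
noncomputable def sProc (s : ℝ) (A1 : ℕ) (X : ℕ → ℕ → Bool) : ℕ → Finset ℕ
  | 0 => Finset.Icc 1 A1
  | (k + 1) =>
      (sProc s A1 X k).filter fun i => ¬(X i (k + 1) = true ∧ (i : ℝ) ≤ s * A1)

open scoped Classical

private lemma rank_strictMono {S : Finset ℕ} {x y : ℕ} (hy : y ∈ S) (hxy : x < y) :
    (S.filter (· ≤ x)).card < (S.filter (· ≤ y)).card := by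
  apply Finset.card_lt_card
  rw [Finset.ssubset_iff_of_subset]
  · exact ⟨y, Finset.mem_filter.mpr ⟨hy, le_refl y⟩, by
      simp only [Finset.mem_filter]; omega⟩
  · intro z hz
    simp only [Finset.mem_filter] at hz ⊢
    exact ⟨hz.1, hz.2.trans hxy.le⟩

private lemma invariant (q s : ℝ) (A1 : ℕ) (X : ℕ → ℕ → Bool)
    (hq0 : 0 ≤ q) (hq1 : q ≤ 1) (h : ⌈s * (A1 : ℝ)⌉₊ ≤ ⌈q * (A1 : ℝ)⌉₊) :
    ∀ k : ℕ, qProc q A1 X k ⊆ sProc s A1 X k ∧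
      ∀ i ∈ qProc q A1 X k, (i : ℝ) ≤ s * A1 →
        ((qProc q A1 X k).filter (· ≤ i)).card ≤ ⌈q * (((qProc q A1 X k).card : ℝ))⌉₊ := by
  intro k
  induction k with
  | zero =>
    constructor
    · simp [qProc, sProc]
    · intro i hi hile
      simp only [qProc, Finset.mem_Icc] at hi ⊢
      have h1 : (Finset.Icc 1 A1).filter (· ≤ i) = Finset.Icc 1 i := by
        ext z
        simp only [Finset.mem_filter, Finset.mem_Icc]
        omega
      have h2 : i ≤ ⌈s * (A1 : ℝ)⌉₊ := by
        have := Nat.le_ceil (s * (A1 : ℝ))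
        exact_mod_cast hile.trans this
      rw [h1, Nat.card_Icc, Nat.card_Icc]
      simp only [Nat.add_sub_cancel]
      omega
  | succ k ih =>
    set S := qProc q A1 X k with hS
    set c := ⌈q * ((S.card : ℕ) : ℝ)⌉₊ with hc
    set P : ℕ → Prop := fun i =>
      ¬(X i (k + 1) = true ∧ (S.filter (· ≤ i)).card ≤ c) with hP
    have hq1def : qProc q A1 X (k + 1) = S.filter P := by
      simp only [qProc, hS, hc, hP]
    have hsubset : qProc q A1 X (k + 1) ⊆ sProc s A1 X (k + 1) := by
      intro i hi
      rw [hq1def, Finset.mem_filter] at hi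
      show i ∈ (sProc s A1 X k).filter _
      rw [Finset.mem_filter]
      refine ⟨ih.1 hi.1, ?_⟩
      rintro ⟨hX, hile⟩
      exact hi.2 ⟨hX, ih.2 i hi.1 hile⟩
    refine ⟨hsubset, ?_⟩
    intro i hi hile
    rw [hq1def] at hi ⊢
    rw [Finset.mem_filter] at hi
    have hiS : i ∈ S := hi.1
    set S' := S.filter P with hS'
    set R := S.filter (fun j => ¬ P j) with hR
    set t := (S.filter (· ≤ i)).card with ht
    set d := R.card with hd
    set a := (R.filter (· ≤ i)).card with ha
    set b := (R.filter (fun j => ¬ j ≤ i)).card with hb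
    set M := ⌈q * ((S'.card : ℕ) : ℝ)⌉₊ with hM
    -- (1) S'.card + d = S.card
    have h1 : S'.card + d = S.card := Finset.card_filter_add_card_filter_not P
    -- (2) (S'.filter (· ≤ i)).card + a = t
    have h2 : (S'.filter (· ≤ i)).card + a = t := by
      have e1 : S'.filter (· ≤ i) = (S.filter (· ≤ i)).filter P := Finset.filter_comm _ _ _
      have e2 : R.filter (· ≤ i) = (S.filter (· ≤ i)).filter (fun j => ¬ P j) :=
        Finset.filter_comm _ _ _
      rw [ha, e1, e2]
      exact Finset.card_filter_add_card_filter_not P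
    -- (3) a + b = d
    have h3 : a + b = d := Finset.card_filter_add_card_filter_not _
    -- (4) t ≤ c
    have h4 : t ≤ c := ih.2 i hiS hile
    -- (5) b ≤ c - t via injection
    have h5 : b ≤ c - t := by
      have := Finset.card_le_card_of_injOn (fun j => (S.filter (· ≤ j)).card)
        (s := R.filter (fun j => ¬ j ≤ i)) (t := Finset.Icc (t + 1) c)
        (fun j hj => by
          simp only [hR, Finset.coe_filter, Set.mem_setOf_eq, Finset.mem_filter] at hj
          obtain ⟨⟨hjS, hnP⟩, hji⟩ := hj
          rw [hP, not_not] at hnP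
          refine Finset.mem_Icc.mpr ⟨?_, hnP.2⟩
          have : i < j := by omega
          exact rank_strictMono hjS this)
        (fun j1 hj1 j2 hj2 heq => by
          simp only [hR, Finset.coe_filter, Set.mem_setOf_eq, Finset.mem_filter] at hj1 hj2
          by_contra hne
          rcases lt_trichotomy j1 j2 with hlt | heq' | hlt
          · exact absurd heq (rank_strictMono hj2.1.1 hlt).ne
          · exact hne heq'
          · exact absurd heq.symm (rank_strictMono hj1.1.1 hlt).ne)
      rw [Nat.card_Icc] at this
      omega
    -- (6) c ≤ M + d
    have h6 : c ≤ M + d := by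
      have hcard : (S.card : ℝ) = (S'.card : ℝ) + (d : ℝ) := by
        exact_mod_cast h1.symm
      have hle : q * (S.card : ℝ) ≤ q * (S'.card : ℝ) + (d : ℝ) := by
        rw [hcard, mul_add]
        have : q * (d : ℝ) ≤ 1 * (d : ℝ) :=
          mul_le_mul_of_nonneg_right hq1 (Nat.cast_nonneg d)
        linarith
      calc c ≤ ⌈q * (S'.card : ℝ) + (d : ℝ)⌉₊ := Nat.ceil_le_ceil hle
        _ = M + d := Nat.ceil_add_natCast (mul_nonneg hq0 (Nat.cast_nonneg _)) d
    omega

theorem stmt7 (A1 r : ℕ) (hA1 : 1 ≤ A1) (hr : 1 ≤ r) (X : ℕ → ℕ → Bool)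
    (q s : ℝ) (hq : 0 < q) (hq1 : q ≤ 1) (hs : 0 ≤ s) (hs1 : s ≤ 1)
    (h : ⌈s * (A1 : ℝ)⌉₊ ≤ ⌈q * (A1 : ℝ)⌉₊) :
    ∀ k : ℕ, k ≤ r → (qProc q A1 X k).card ≤ (sProc s A1 X k).card := by
  intro k _
  exact Finset.card_le_card ((invariant q s A1 X hq.le hq1 h k).1)
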